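/- arXiv:1507.05258 — 6 statements merged into one kernel-verified Lean document; each statement's English description precedes it below -/
import Mathlib

section
/- Suppose w_i > 0 for every i ∈ V. If x* ∈ S is a local minimizer of J on the feasible set S, then every coordinate of x* is binary, i.e., x*_i = 0 or x*_i = 1 for all i ∈ V. -/
/-- The observability feasible set `S`: all `x : V → ℝ` with
`f_i(x) = (1 - x i) * ∏_{j ∈ a(i)} (1 - x j) = 0` for every bus `i`,
and box constraints `0 ≤ x i ≤ 1`. -/
def pmuFeasible {V : Type*} [Fintype V] (G : SimpleGraph V) [DecidableRel G.Adj] :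
    Set (V → ℝ) :=
  {x | (∀ i, (1 - x i) * ∏ j ∈ G.neighborFinset i, (1 - x j) = 0) ∧
    ∀ i, 0 ≤ x i ∧ x i ≤ 1}

/-- If all weights are positive, then any local minimizer of
`J(x) = ∑ i, w i * (x i)^2` on the feasible set `S` has all coordinates binary. -/
theorem stmt_0 {V : Type*} [Fintype V] (G : SimpleGraph V) [DecidableRel G.Adj]
    (w : V → ℝ) (hw : ∀ i, 0 < w i) (x : V → ℝ)
    (hxS : x ∈ pmuFeasible G)
    (hmin : IsLocalMinOn (fun y : V → ℝ => ∑ i, w i * (y i) ^ 2) (pmuFeasible G) x) :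
    ∀ i, x i = 0 ∨ x i = 1 := by
  classical
  obtain ⟨hfeas, hbox⟩ := hxS
  intro i
  by_contra hcon
  push_neg at hcon
  obtain ⟨h0, h1⟩ := hcon
  have hxi0 : 0 < x i := lt_of_le_of_ne (hbox i).1 (Ne.symm h0)
  have hxi1 : x i < 1 := lt_of_le_of_ne (hbox i).2 h1
  obtain ⟨ε, hε, hball⟩ := Metric.mem_nhdsWithin_iff.mp hmin
  set δ : ℝ := min (x i) ε / 2 with hδdef
  have hδpos : 0 < δ := by positivity
  have hδxi : δ < x i := by
    have : min (x i) ε ≤ x i := min_le_left _ _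
    have h2 : δ ≤ x i / 2 := by rw [hδdef]; linarith
    linarith
  have hδε : δ < ε := by
    have : min (x i) ε ≤ ε := min_le_right _ _
    rw [hδdef]; linarith
  set y : V → ℝ := Function.update x i (x i - δ) with hy
  have hyne : ∀ j, j ≠ i → y j = x j := fun j hj => Function.update_of_ne hj _ _
  have hyi : y i = x i - δ := Function.update_self _ _ _
  -- y is feasible
  have hyS : y ∈ pmuFeasible G := by
    constructor
    · intro k
      rcases mul_eq_zero.mp (hfeas k) with hk | hk
      · have hki : k ≠ i := by intro h; rw [h] at hk; linarith
        rw [hyne k hki]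
        exact mul_eq_zero.mpr (Or.inl hk)
      · obtain ⟨j, hjmem, hj⟩ := Finset.prod_eq_zero_iff.mp hk
        have hji : j ≠ i := by intro h; rw [h] at hj; linarith
        refine mul_eq_zero.mpr (Or.inr ?_)
        refine Finset.prod_eq_zero hjmem ?_
        rw [hyne j hji]; exact hj
    · intro k
      by_cases hk : k = i
      · subst hk; rw [hyi]; constructor <;> linarith [(hbox k).2]
      · rw [hyne k hk]; exact hbox k
  -- y is in the ball
  have hyball : y ∈ Metric.ball x ε := by
    rw [Metric.mem_ball]
    rw [dist_pi_lt_iff hε]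
    intro j
    by_cases hj : j = i
    · subst hj
      rw [hyi, Real.dist_eq]
      rw [show x j - δ - x j = -δ by ring, abs_neg, abs_of_pos hδpos]
      exact hδε
    · rw [hyne j hj, dist_self]; exact hε
  have hle := hball ⟨hyball, hyS⟩
  simp only [Set.mem_setOf_eq] at hle
  -- but J(y) < J(x)
  have hlt : ∑ j, w j * (y j) ^ 2 < ∑ j, w j * (x j) ^ 2 := by
    apply Finset.sum_lt_sum
    · intro j _
      by_cases hj : j = i
      · subst hj
        rw [hyi]
        have h1 : (x j - δ) ^ 2 < (x j) ^ 2 := by nlinarith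
        nlinarith [hw j]
      · rw [hyne j hj]
    · refine ⟨i, Finset.mem_univ i, ?_⟩
      rw [hyi]
      have h1 : (x i - δ) ^ 2 < (x i) ^ 2 := by nlinarith
      nlinarith [hw i]
  linarith
end

section
/- Let x ∈ S and suppose there exists k ∈ V with w_k > 0 and 0 < x_k < 1. Then x is not a local minimizer of J on S: for every ε > 0 there exists y ∈ S with ‖y − x‖ < ε and J(y) < J(x). -/
/-- Main construction: arbitrarily close feasible points with smaller objective. -/
theorem pmu_improve {V : Type*} [Fintype V] (G : SimpleGraph V) [DecidableRel G.Adj]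
    (w : V → ℝ) (x : V → ℝ) (hxS : x ∈ pmuFeasible G)
    (k : V) (hwk : 0 < w k) (h0 : 0 < x k) (h1 : x k < 1) :
    ∀ ε > 0, ∃ y ∈ pmuFeasible G, dist y x < ε ∧
      (∑ i, w i * (y i) ^ 2) < ∑ i, w i * (x i) ^ 2 := by
  classical
  intro ε hε
  set δ : ℝ := min (ε / 2) (x k) with hδdef
  have hδpos : 0 < δ := lt_min (by linarith) h0
  have hδle : δ ≤ x k := min_le_right _ _
  have hδε : δ < ε := lt_of_le_of_lt (min_le_left _ _) (by linarith)
  set y : V → ℝ := Function.update x k (x k - δ) with hy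
  have hyk : y k = x k - δ := Function.update_self _ _ _
  have hyne : ∀ i, i ≠ k → y i = x i := fun i hi => Function.update_of_ne hi _ _
  refine ⟨y, ⟨?_, ?_⟩, ?_, ?_⟩
  · -- constraints
    intro i
    rcases mul_eq_zero.1 (hxS.1 i) with hi | hp
    · -- x i = 1, so i ≠ k
      have hxi : x i = 1 := by linarith
      have hik : i ≠ k := fun h => by rw [h] at hxi; linarith
      rw [hyne i hik, hxi]
      simp
    · -- some neighbor m has x m = 1
      obtain ⟨m, hm, hm0⟩ := Finset.prod_eq_zero_iff.1 hp
      have hxm : x m = 1 := by linarith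
      have hmk : m ≠ k := fun h => by rw [h] at hxm; linarith
      have : ∏ j ∈ G.neighborFinset i, (1 - y j) = 0 := by
        apply Finset.prod_eq_zero hm
        rw [hyne m hmk, hxm]; ring
      rw [this, mul_zero]
  · -- bounds
    intro i
    by_cases hik : i = k
    · subst hik
      rw [hyk]
      constructor <;> linarith
    · rw [hyne i hik]; exact hxS.2 i
  · -- distance
    rw [dist_pi_lt_iff hε]
    intro b
    by_cases hbk : b = k
    · rw [hbk, hyk, Real.dist_eq]
      have : x k - δ - x k = -δ := by ring
      rw [this, abs_neg, abs_of_pos hδpos]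
      exact hδε
    · rw [hyne b hbk]
      simpa using hε
  · -- objective decreases
    apply Finset.sum_lt_sum
    · intro i _
      by_cases hik : i = k
      · rw [hik, hyk]
        have h2 : (x k - δ)^2 < (x k)^2 := by nlinarith
        nlinarith
      · rw [hyne i hik]
    · refine ⟨k, Finset.mem_univ k, ?_⟩
      rw [hyk]
      have h2 : (x k - δ)^2 < (x k)^2 := by nlinarith
      nlinarith

/-- If `x ∈ S` has a strictly fractional coordinate `0 < x k < 1` with positive
weight `w k > 0`, then `x` is not a local minimizer of `J(x) = ∑ i, w i * (x i)^2`
on `S`: arbitrarily close to `x` there are feasible points with strictly smaller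
objective. -/
theorem stmt_5 {V : Type*} [Fintype V] (G : SimpleGraph V) [DecidableRel G.Adj]
    (w : V → ℝ) (x : V → ℝ) (hxS : x ∈ pmuFeasible G)
    (k : V) (hwk : 0 < w k) (h0 : 0 < x k) (h1 : x k < 1) :
    ¬ IsLocalMinOn (fun y : V → ℝ => ∑ i, w i * (y i) ^ 2) (pmuFeasible G) x ∧
    ∀ ε > 0, ∃ y ∈ pmuFeasible G, dist y x < ε ∧
      (∑ i, w i * (y i) ^ 2) < ∑ i, w i * (x i) ^ 2 := by
  have key := pmu_improve G w x hxS k hwk h0 h1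
  refine ⟨?_, key⟩
  intro hmin
  have hmem : {y : V → ℝ | (∑ i, w i * (x i) ^ 2) ≤ ∑ i, w i * (y i) ^ 2} ∈
      nhdsWithin x (pmuFeasible G) := hmin
  rw [Metric.mem_nhdsWithin_iff] at hmem
  obtain ⟨ε, hε, hball⟩ := hmem
  obtain ⟨y, hyS, hyd, hylt⟩ := key ε hε
  exact absurd (hball ⟨Metric.mem_ball.2 hyd, hyS⟩) (not_le.2 hylt)
end

section
/- Suppose w_i = 1 for all i ∈ V. Then the minimum of J over the feasible set S is attained, and its value equals the domination number of G, i.e., the minimum cardinality of a dominating set of G. -/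
/-- For unit weights, the minimum of `J(x) = ∑ i, w i * (x i)^2` over the feasible
set `S` is attained, and its value equals the domination number of `G`. -/
theorem stmt_10 {V : Type*} [Fintype V] (G : SimpleGraph V) [DecidableRel G.Adj]
    (w : V → ℝ) (hw : ∀ i, w i = 1) :
    ∃ x ∈ pmuFeasible G, (∀ y ∈ pmuFeasible G,
        (∑ i, w i * (x i) ^ 2) ≤ ∑ i, w i * (y i) ^ 2) ∧
      (∑ i, w i * (x i) ^ 2) =
        ((sInf {n : ℕ | ∃ D : Finset V,
          (∀ v, v ∈ D ∨ ∃ d ∈ D, G.Adj v d) ∧ D.card = n} : ℕ) : ℝ) := by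
  classical
  set Sn : Set ℕ := {n : ℕ | ∃ D : Finset V,
    (∀ v, v ∈ D ∨ ∃ d ∈ D, G.Adj v d) ∧ D.card = n} with hSn
  have hne : Sn.Nonempty :=
    ⟨Finset.univ.card, Finset.univ, fun v => Or.inl (Finset.mem_univ v), rfl⟩
  obtain ⟨D, hD, hcard⟩ := Nat.sInf_mem hne
  refine ⟨fun i => if i ∈ D then (1:ℝ) else 0, ⟨?_, ?_⟩, ?_, ?_⟩
  · intro i
    rcases hD i with hi | ⟨d, hd, hadj⟩
    · simp [hi]
    · apply mul_eq_zero_of_right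
      apply Finset.prod_eq_zero (((G.mem_neighborFinset i d).mpr hadj))
      simp [hd]
  · intro i
    by_cases hi : i ∈ D <;> simp [hi]
  · rintro y ⟨hy1, hy2⟩
    set Dy : Finset V := Finset.univ.filter (fun i => y i = 1) with hDydef
    have hDy : ∀ v, v ∈ Dy ∨ ∃ d ∈ Dy, G.Adj v d := by
      intro v
      rcases mul_eq_zero.mp (hy1 v) with h | h
      · left; simp only [hDydef, Finset.mem_filter, Finset.mem_univ, true_and]; linarith
      · obtain ⟨j, hj, hj0⟩ := Finset.prod_eq_zero_iff.mp h
        exact Or.inr ⟨j, by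
          simp only [hDydef, Finset.mem_filter, Finset.mem_univ, true_and]; linarith,
          (G.mem_neighborFinset v j).mp hj⟩
    have h1 : sInf Sn ≤ Dy.card := Nat.sInf_le ⟨Dy, hDy, rfl⟩
    have h2 : (Dy.card : ℝ) ≤ ∑ i, w i * y i ^ 2 := by
      calc (Dy.card : ℝ) = ∑ i ∈ Dy, w i * y i ^ 2 := by
            rw [Finset.card_eq_sum_ones]; push_cast
            refine Finset.sum_congr rfl fun i hi => ?_
            simp only [hDydef, Finset.mem_filter] at hi
            simp [hw, hi.2]
        _ ≤ ∑ i, w i * y i ^ 2 := by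
            refine Finset.sum_le_sum_of_subset_of_nonneg (Finset.subset_univ _)
              fun i _ _ => ?_
            rw [hw]; positivity
    have h3 : (∑ i, w i * (if i ∈ D then (1:ℝ) else 0) ^ 2) = D.card := by
      simp [hw, ite_pow, Finset.sum_boole, Finset.filter_mem_eq_inter]
    rw [h3, hcard]
    calc ((sInf Sn : ℕ) : ℝ) ≤ (Dy.card : ℝ) := by exact_mod_cast h1
      _ ≤ _ := h2
  · have h3 : (∑ i, w i * (if i ∈ D then (1:ℝ) else 0) ^ 2) = D.card := by
      simp [hw, ite_pow, Finset.sum_boole, Finset.filter_mem_eq_inter]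
    rw [h3, hcard]
end

section
/- Suppose w_i = 1 for all i ∈ V. Then every x* ∈ S that attains the minimum of J over S is the indicator vector χ_D of some dominating set D of G of minimum cardinality. -/
/-- Indicator vectors of dominating sets are feasible. -/
lemma indicator_feasible {V : Type*} [Fintype V] [DecidableEq V] (G : SimpleGraph V)
    [DecidableRel G.Adj] (D : Finset V) (hdom : ∀ v, v ∈ D ∨ ∃ d ∈ D, G.Adj v d) :
    (fun i => if i ∈ D then (1 : ℝ) else 0) ∈ pmuFeasible G := by
  constructor
  · intro i
    rcases hdom i with h | ⟨d, hd, hadj⟩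
    · simp [h]
    · apply mul_eq_zero_of_right
      apply Finset.prod_eq_zero (i := d)
      · exact (G.mem_neighborFinset i d).2 hadj
      · simp [hd]
  · intro i; dsimp only; split <;> norm_num

lemma indicator_sum {V : Type*} [Fintype V] [DecidableEq V] (D : Finset V) :
    (∑ i, (if i ∈ D then (1 : ℝ) else 0) ^ 2) = D.card := by
  rw [Finset.sum_congr rfl (fun i _ => by split <;> norm_num :
    ∀ i ∈ Finset.univ, (if i ∈ D then (1 : ℝ) else 0) ^ 2 = if i ∈ D then 1 else 0)]
  simp

/-- For unit weights, every global minimizer of `J` over `S` is the indicator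
vector of a dominating set of `G` of minimum cardinality. -/
theorem stmt_11 {V : Type*} [Fintype V] [DecidableEq V] (G : SimpleGraph V)
    [DecidableRel G.Adj] (w : V → ℝ) (hw : ∀ i, w i = 1)
    (x : V → ℝ) (hxS : x ∈ pmuFeasible G)
    (hmin : ∀ y ∈ pmuFeasible G,
      (∑ i, w i * (x i) ^ 2) ≤ ∑ i, w i * (y i) ^ 2) :
    ∃ D : Finset V, (∀ v, v ∈ D ∨ ∃ d ∈ D, G.Adj v d) ∧
      D.card = sInf {n : ℕ | ∃ D' : Finset V,
        (∀ v, v ∈ D' ∨ ∃ d ∈ D', G.Adj v d) ∧ D'.card = n} ∧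
      x = fun i => if i ∈ D then (1 : ℝ) else 0 := by
  obtain ⟨hfeas, hbound⟩ := hxS
  simp only [hw, one_mul] at hmin
  set D : Finset V := Finset.univ.filter (fun i => x i = 1) with hD
  have hmemD : ∀ i, i ∈ D ↔ x i = 1 := by intro i; simp [hD]
  have hdom : ∀ v, v ∈ D ∨ ∃ d ∈ D, G.Adj v d := by
    intro v
    rcases mul_eq_zero.1 (hfeas v) with h | h
    · exact Or.inl ((hmemD v).2 (by linarith))
    · obtain ⟨j, hj, hj0⟩ := Finset.prod_eq_zero_iff.1 h
      exact Or.inr ⟨j, (hmemD j).2 (by linarith), (G.mem_neighborFinset v j).1 hj⟩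
  -- upper bound: sum x² ≤ card of any dominating set
  have hle : ∀ D' : Finset V, (∀ v, v ∈ D' ∨ ∃ d ∈ D', G.Adj v d) →
      (∑ i, (x i) ^ 2) ≤ D'.card := by
    intro D' hdom'
    have := hmin _ (indicator_feasible G D' hdom')
    simpa [indicator_sum] using this
  -- lower bound: card D ≤ sum x²
  have hge : (D.card : ℝ) ≤ ∑ i, (x i) ^ 2 := by
    have : (D.card : ℝ) = ∑ i ∈ D, (x i) ^ 2 := by
      rw [Finset.sum_congr rfl (fun i hi => by
        rw [(hmemD i).1 hi]; norm_num : ∀ i ∈ D, (x i) ^ 2 = (1:ℝ))]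
      simp
    rw [this]
    exact Finset.sum_le_sum_of_subset_of_nonneg (Finset.subset_univ D)
      (fun i _ _ => sq_nonneg (x i))
  have heq : (∑ i, (x i) ^ 2) = D.card := le_antisymm (hle D hdom) hge
  -- x vanishes off D
  have hzero : ∀ i, i ∉ D → x i = 0 := by
    have hsplit : (∑ i ∈ D, (x i) ^ 2) + ∑ i ∈ Dᶜ, (x i) ^ 2 = ∑ i, (x i) ^ 2 :=
      Finset.sum_add_sum_compl D _
    have hDsum : (∑ i ∈ D, (x i) ^ 2) = D.card := by
      rw [Finset.sum_congr rfl (fun i hi => by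
        rw [(hmemD i).1 hi]; norm_num : ∀ i ∈ D, (x i) ^ 2 = (1:ℝ))]
      simp
    have hcomp : (∑ i ∈ Dᶜ, (x i) ^ 2) = 0 := by
      rw [hDsum, heq] at hsplit; linarith
    intro i hi
    have := (Finset.sum_eq_zero_iff_of_nonneg (fun j _ => sq_nonneg (x j))).1 hcomp i
      (Finset.mem_compl.2 hi)
    exact pow_eq_zero_iff (by norm_num) |>.1 this
  refine ⟨D, hdom, ?_, ?_⟩
  · apply le_antisymm
    · have hne : {n : ℕ | ∃ D' : Finset V,
          (∀ v, v ∈ D' ∨ ∃ d ∈ D', G.Adj v d) ∧ D'.card = n}.Nonempty :=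
        ⟨D.card, D, hdom, rfl⟩
      apply le_csInf hne
      rintro n ⟨D', hdom', rfl⟩
      exact_mod_cast heq ▸ hle D' hdom'
    · exact Nat.sInf_le ⟨D, hdom, rfl⟩
  · funext i
    by_cases hi : i ∈ D
    · simp [hi, (hmemD i).1 hi]
    · simp [hi, hzero i hi]
end

section
/- Suppose G has a vertex i of degree 1, with unique neighbor j. Then the feasible set S is not convex: the vectors 1 − e_i and 1 − e_j (all coordinates equal to 1 except the i-th, respectively j-th, coordinate equal to 0) both belong to S, but their midpoint does not belong to S. -/
/-- If `G` has a vertex `i` of degree 1 with unique neighbor `j`, then the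
feasible set `S` is not convex: the vectors `1 - e_i` and `1 - e_j` belong to
`S`, but their midpoint does not. -/
theorem stmt_14 {V : Type*} [Fintype V] [DecidableEq V] (G : SimpleGraph V)
    [DecidableRel G.Adj] (i j : V) (hdeg : G.degree i = 1)
    (hnbr : G.neighborFinset i = {j}) :
    ((fun v => if v = i then (0 : ℝ) else 1) ∈ pmuFeasible G) ∧
    ((fun v => if v = j then (0 : ℝ) else 1) ∈ pmuFeasible G) ∧
    (1 / 2 : ℝ) • ((fun v => if v = i then (0 : ℝ) else 1) +
        (fun v => if v = j then (0 : ℝ) else 1)) ∉ pmuFeasible G ∧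
    ¬ Convex ℝ (pmuFeasible G) := by
  have hij : G.Adj i j := by
    rw [← SimpleGraph.mem_neighborFinset, hnbr]; simp
  have hne : i ≠ j := hij.ne
  have hm1 : (fun v => if v = i then (0 : ℝ) else 1) ∈ pmuFeasible G := by
    constructor
    · intro k
      by_cases hk : k = i
      · subst hk
        rw [hnbr]
        simp [hne.symm]
      · simp [hk]
    · intro k
      by_cases hk : k = i <;> simp [hk]
  have hm2 : (fun v => if v = j then (0 : ℝ) else 1) ∈ pmuFeasible G := by
    constructor
    · intro k
      by_cases hk : k = j
      · subst hk
        apply mul_eq_zero_of_right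
        apply Finset.prod_eq_zero (i := i)
        · rw [SimpleGraph.mem_neighborFinset]; exact hij.symm
        · simp [hne]
      · simp [hk]
    · intro k
      by_cases hk : k = j <;> simp [hk]
  have hmid : (1 / 2 : ℝ) • ((fun v => if v = i then (0 : ℝ) else 1) +
      (fun v => if v = j then (0 : ℝ) else 1)) ∉ pmuFeasible G := by
    rintro ⟨h1, -⟩
    have := h1 i
    rw [hnbr] at this
    simp [Pi.smul_apply, Pi.add_apply, hne, hne.symm] at this
    norm_num at this
  refine ⟨hm1, hm2, hmid, fun hconv => hmid ?_⟩
  have := hconv hm1 hm2 (by norm_num : (0:ℝ) ≤ 1/2) (by norm_num : (0:ℝ) ≤ 1/2)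
    (by norm_num)
  rwa [smul_add]
end

section
/- Every dominating set of the IEEE 14-bus graph has cardinality at least 4; combined with the existence of the dominating set {2, 6, 7, 9}, the domination number of the IEEE 14-bus graph (the minimum number of PMUs needed for full observability) equals 4. -/
/-- Edge list of the IEEE 14-bus system. Buses `1,…,14` are represented by the
elements of `Fin 14`, bus `n` being the literal `(n : Fin 14)` (so bus 14 is
`(14 : Fin 14) = 0`). -/
def ieee14Edges : List (Fin 14 × Fin 14) :=
  [(1,2),(1,5),(2,3),(2,4),(2,5),(3,4),(4,5),(4,7),(4,9),(5,6),
   (6,11),(6,12),(6,13),(7,8),(7,9),(9,10),(9,14),(10,11),(12,13),(13,14)]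

/-- The IEEE 14-bus graph. -/
def ieee14 : SimpleGraph (Fin 14) where
  Adj a b := a ≠ b ∧ ((a, b) ∈ ieee14Edges ∨ (b, a) ∈ ieee14Edges)
  symm := ⟨fun _ _ ⟨h1, h2⟩ => ⟨h1.symm, h2.symm⟩⟩
  loopless := ⟨fun _ ⟨h1, _⟩ => h1 rfl⟩

instance : DecidableRel ieee14.Adj := fun a b =>
  inferInstanceAs (Decidable (a ≠ b ∧ ((a, b) ∈ ieee14Edges ∨ (b, a) ∈ ieee14Edges)))

set_option maxHeartbeats 16000000 in
set_option maxRecDepth 10000 in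
lemma ieee14_no_dom3' : ∀ a b c : Fin 14, a < b → b < c →
    ¬ (∀ v, v ∈ ({a,b,c} : Finset (Fin 14)) ∨
        ∃ d ∈ ({a,b,c} : Finset (Fin 14)), ieee14.Adj v d) := by decide

lemma ieee14_dom4 : ∀ v : Fin 14, v ∈ ({2,6,7,9} : Finset (Fin 14)) ∨
    ∃ d ∈ ({2,6,7,9} : Finset (Fin 14)), ieee14.Adj v d := by decide

lemma ieee14_no_dom3 (a b c : Fin 14) (hab : a ≠ b) (hac : a ≠ c) (hbc : b ≠ c) :
    ¬ (∀ v, v ∈ ({a,b,c} : Finset (Fin 14)) ∨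
        ∃ d ∈ ({a,b,c} : Finset (Fin 14)), ieee14.Adj v d) := by
  obtain ⟨x, y, z, hxy, hyz, hset⟩ : ∃ x y z : Fin 14, x < y ∧ y < z ∧
      ({a,b,c} : Finset (Fin 14)) = {x,y,z} := by
    rcases lt_trichotomy a b with h1 | h1 | h1
    · rcases lt_trichotomy b c with h2 | h2 | h2
      · exact ⟨a, b, c, h1, h2, rfl⟩
      · exact absurd h2 hbc
      · rcases lt_trichotomy a c with h3 | h3 | h3
        · exact ⟨a, c, b, h3, h2, by ext t; simp; tauto⟩
        · exact absurd h3 hac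
        · exact ⟨c, a, b, h3, h1, by ext t; simp; tauto⟩
    · exact absurd h1 hab
    · rcases lt_trichotomy a c with h2 | h2 | h2
      · exact ⟨b, a, c, h1, h2, by ext t; simp; tauto⟩
      · exact absurd h2 hac
      · rcases lt_trichotomy b c with h3 | h3 | h3
        · exact ⟨b, c, a, h3, h2, by ext t; simp; tauto⟩
        · exact absurd h3 hbc
        · exact ⟨c, b, a, h3, h1, by ext t; simp; tauto⟩
  rw [hset]
  exact ieee14_no_dom3' x y z hxy hyz

lemma ieee14_lower :
    ∀ D : Finset (Fin 14), (∀ v, v ∈ D ∨ ∃ d ∈ D, ieee14.Adj v d) → 4 ≤ D.card := by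
  intro D hD
  by_contra h
  push_neg at h
  have h3 : D.card ≤ 3 := by omega
  obtain ⟨T, hDT, hT3⟩ := Finset.exists_superset_card_eq h3 (by simp)
  obtain ⟨a, b, c, hab, hac, hbc, rfl⟩ := Finset.card_eq_three.mp hT3
  exact ieee14_no_dom3 a b c hab hac hbc (fun v => (hD v).imp (fun h => hDT h)
    (fun ⟨d, hd, hadj⟩ => ⟨d, hDT hd, hadj⟩))

/-- Every dominating set of the IEEE 14-bus graph has at least 4 vertices; hence,
together with the dominating set {2,6,7,9}, the domination number of the IEEE
14-bus graph (the minimum number of PMUs for full observability) equals 4. -/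
theorem stmt_16 :
    (∀ D : Finset (Fin 14), (∀ v, v ∈ D ∨ ∃ d ∈ D, ieee14.Adj v d) → 4 ≤ D.card) ∧
    sInf {n : ℕ | ∃ D : Finset (Fin 14),
      (∀ v, v ∈ D ∨ ∃ d ∈ D, ieee14.Adj v d) ∧ D.card = n} = 4 := by
  refine ⟨ieee14_lower, ?_⟩
  have hmem : 4 ∈ {n : ℕ | ∃ D : Finset (Fin 14),
      (∀ v, v ∈ D ∨ ∃ d ∈ D, ieee14.Adj v d) ∧ D.card = n} :=
    ⟨{2,6,7,9}, ieee14_dom4, by decide⟩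
  refine le_antisymm (Nat.sInf_le hmem) ?_
  refine le_csInf ⟨4, hmem⟩ ?_
  rintro n ⟨D, hD, rfl⟩
  exact ieee14_lower D hD
end
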